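/- Let f : H → G be a core-free virtual endomorphism of a group G and d ≥ 1. Then the map ḟ : H × G^{d-1} → G^d defined by ḟ(h₁, g₂, …, g_d) = (g₂, …, g_d, f(h₁)) is a core-free virtual endomorphism of G^d of index [G:H]. -/
import Mathlib


/-- `f : H → G` is a core-free virtual endomorphism. -/
def CoreFree {G : Type*} [Group G] (H : Subgroup G) (f : ↥H →* G) : Prop :=
  ∀ K : Subgroup G, K ≤ H → K.Normal → (∀ x : ↥H, (x : G) ∈ K → f x ∈ K) → K = ⊥

/-- The subgroup `H × G^{d-1}` of `G^d` (first coordinate in `H`). -/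
def firstInH {G : Type*} [Group G] (H : Subgroup G) (d : ℕ) [NeZero d] :
    Subgroup (Fin d → G) :=
  Subgroup.pi Set.univ (fun i => if i = 0 then H else ⊤)

/-- The economical virtual endomorphism
`ḟ(h₁, g₂, …, g_d) = (g₂, …, g_d, f(h₁))` of `G^d`. -/
def cycleVE {G : Type*} [Group G] (H : Subgroup G) (f : ↥H →* G) (d : ℕ) [NeZero d] :
    ↥(firstInH H d) →* (Fin d → G) :=
  MonoidHom.mk'
    (fun x i =>
      if h : (i : ℕ) + 1 < d then (x : Fin d → G) ⟨(i : ℕ) + 1, h⟩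
      else f ⟨(x : Fin d → G) 0, by simpa using x.2 0 (Set.mem_univ 0)⟩)
    (by
      intro a b
      funext i
      by_cases h : (i : ℕ) + 1 < d <;> simp [h, ← map_mul] <;> rfl)

lemma cycleVE_apply_lt {G : Type*} [Group G] (H : Subgroup G) (f : ↥H →* G) (d : ℕ)
    [NeZero d] (x : ↥(firstInH H d)) (i : Fin d) (h : (i : ℕ) + 1 < d) :
    cycleVE H f d x i = (x : Fin d → G) ⟨(i : ℕ) + 1, h⟩ := by
  simp [cycleVE, h]

lemma cycleVE_apply_last {G : Type*} [Group G] (H : Subgroup G) (f : ↥H →* G) (d : ℕ)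
    [NeZero d] (x : ↥(firstInH H d)) (i : Fin d) (h : ¬ ((i : ℕ) + 1 < d)) :
    cycleVE H f d x i
      = f ⟨(x : Fin d → G) 0, by simpa using x.2 0 (Set.mem_univ 0)⟩ := by
  simp [cycleVE, h]

/-- if `f : H → G` is core-free of finite index, then `ḟ` is a core-free
virtual endomorphism of `G^d` of index `[G : H]`. -/
theorem cycleVE_coreFree {G : Type*} [Group G] (H : Subgroup G) [H.FiniteIndex]
    (f : ↥H →* G) (d : ℕ) [NeZero d] (hf : CoreFree H f) :
    CoreFree (firstInH H d) (cycleVE H f d) ∧ (firstInH H d).index = H.index := by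
  constructor
  · intro K hK hKnorm hKf
    set π : Fin d → ((Fin d → G) →* G) := fun j => Pi.evalMonoidHom (fun _ => G) j with hπ
    set Kj : Fin d → Subgroup G := fun j => K.map (π j) with hKj
    have hsurj : ∀ j, Function.Surjective (π j) := by
      intro j g
      exact ⟨Function.update 1 j g, by simp [hπ, Pi.evalMonoidHom]⟩
    have hnorm : ∀ j, (Kj j).Normal := fun j => Subgroup.Normal.map hKnorm _ (hsurj j)
    have hstep : ∀ (i : Fin d) (h : (i : ℕ) + 1 < d), Kj ⟨(i : ℕ) + 1, h⟩ ≤ Kj i := by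
      rintro i h g ⟨x, hx, rfl⟩
      refine ⟨cycleVE H f d ⟨x, hK hx⟩, hKf _ hx, ?_⟩
      simpa [hπ, Pi.evalMonoidHom] using cycleVE_apply_lt H f d ⟨x, hK hx⟩ i h
    have hle : ∀ j : Fin d, Kj j ≤ Kj 0 := by
      intro j
      obtain ⟨n, hn⟩ := j
      induction n with
      | zero =>
          have : (⟨0, hn⟩ : Fin d) = 0 := by ext; simp
          rw [this]
      | succ m ih =>
          have hm : m < d := Nat.lt_of_succ_lt hn
          exact le_trans (hstep ⟨m, hm⟩ hn) (ih hm)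
    have hK0H : Kj 0 ≤ H := by
      rintro g ⟨x, hx, rfl⟩
      simpa [hπ, Pi.evalMonoidHom] using hK hx 0 (Set.mem_univ 0)
    have hK0f : ∀ y : ↥H, (y : G) ∈ Kj 0 → f y ∈ Kj 0 := by
      rintro y ⟨x, hx, hx0⟩
      have hd : ¬ ((⟨d - 1, Nat.sub_lt (NeZero.pos d) one_pos⟩ : Fin d) : ℕ) + 1 < d := by
        simp [Nat.sub_add_cancel (NeZero.one_le)]
      have h1 : cycleVE H f d ⟨x, hK hx⟩ ⟨d - 1, Nat.sub_lt (NeZero.pos d) one_pos⟩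
          = f ⟨x 0, by simpa using hK hx 0 (Set.mem_univ 0)⟩ :=
        cycleVE_apply_last H f d ⟨x, hK hx⟩ _ hd
      have h2 : f y = f ⟨x 0, by simpa using hK hx 0 (Set.mem_univ 0)⟩ := by
        congr 1
        exact Subtype.ext (by simpa [hπ, Pi.evalMonoidHom] using hx0.symm)
      have hmem : f y ∈ Kj ⟨d - 1, Nat.sub_lt (NeZero.pos d) one_pos⟩ := by
        rw [h2, ← h1]
        exact ⟨cycleVE H f d ⟨x, hK hx⟩, hKf _ hx, rfl⟩
      exact hle _ hmem
    have hbot : Kj 0 = ⊥ := hf (Kj 0) hK0H (hnorm 0) hK0f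
    ext x
    simp only [Subgroup.mem_bot]
    constructor
    · intro hx
      funext j
      have : x j ∈ Kj 0 := hle j ⟨x, hx, rfl⟩
      rw [hbot] at this
      simpa using this
    · rintro rfl
      exact K.one_mem
  · rw [firstInH, Subgroup.index_pi]
    rw [Fintype.prod_eq_single (0 : Fin d) (fun i hi => by simp [hi, Subgroup.index_top])]
    simp
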